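/- arXiv:0706.2370 — 3 statements merged into one kernel-verified Lean document; each statement's English description precedes it below -/
import Mathlib

section
/- Assume that: (i) there exists ρ > 0 with |∂_a γ_1^{(i)}(a,b)| ≥ ρ for i ∈ {1,2} and all (a,b) ∈ Δ₁ × Δ₂; (ii) there exists K > 1 such that |f_{a,b}'(x)| ≥ K for all (a,b) ∈ Δ₁ × Δ₂ and all x ∈ I ∖ C_{δ₁}(a,b); (iii) Kρ − ‖∂_aF‖_{C⁰} ≥ (3/4)K; and (iv) ‖∂_aF‖_{C⁰} · Σ_{j=2}^∞ K^{−j} ≤ 1/4. Then for every i ∈ {1,2}, every (a,b) ∈ Δ₁ × Δ₂ and every n ≥ 2 such that γ_j^{(i)}(a,b) ∈ I ∖ C_{δ₁}(a,b) for all 1 ≤ j ≤ n−1, one has |∂_a γ_n^{(i)}(a,b)| ≥ (1/2) K^{n−1}. -/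
open Set

/-- Exponential growth of parametric derivatives of the critical curves.
In the setting of the two-parameter family `f_{a,b}(x) = F x a b` with two critical
points `c1 a b`, `c2 a b` and critical curves `γ n i a b = f_{a,b}^[n](cᵢ a b)`, assume
(i) `|∂ₐ γ 1 i| ≥ ρ` on `Δ₁ × Δ₂`, (ii) `|f_{a,b}'| ≥ K > 1` off the `δ₁`-neighborhood
of the critical set, (iii) `Kρ − ‖∂ₐF‖₀ ≥ (3/4)K`, (iv) `‖∂ₐF‖₀ · Σ_{j≥2} K^{−j} ≤ 1/4`.
Then whenever `γ j i (a,b) ∈ I ∖ C_{δ₁}(a,b)` for `1 ≤ j ≤ n−1` (with `n ≥ 2`),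
one has `|∂ₐ γ n i (a,b)| ≥ (1/2) K^{n−1}`. -/
theorem stmt_1
    (F : ℝ → ℝ → ℝ → ℝ)
    (x1 x2 a1 a2 b1 b2 : ℝ)
    (hF : ContDiff ℝ 2 (fun p : ℝ × ℝ × ℝ => F p.1 p.2.1 p.2.2))
    (hFmaps : ∀ x ∈ Icc x1 x2, ∀ a ∈ Icc a1 a2, ∀ b ∈ Icc b1 b2, F x a b ∈ Icc x1 x2)
    (c1 c2 : ℝ → ℝ → ℝ)
    (hc1C1 : ContDiffOn ℝ 1 (fun p : ℝ × ℝ => c1 p.1 p.2) (Icc a1 a2 ×ˢ Icc b1 b2))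
    (hc2C1 : ContDiffOn ℝ 1 (fun p : ℝ × ℝ => c2 p.1 p.2) (Icc a1 a2 ×ˢ Icc b1 b2))
    (hc1 : ∀ a ∈ Icc a1 a2, ∀ b ∈ Icc b1 b2,
      c1 a b ∈ Icc x1 x2 ∧ deriv (fun x => F x a b) (c1 a b) = 0)
    (hc2 : ∀ a ∈ Icc a1 a2, ∀ b ∈ Icc b1 b2,
      c2 a b ∈ Icc x1 x2 ∧ deriv (fun x => F x a b) (c2 a b) = 0)
    -- critical curves
    (γ : ℕ → Fin 2 → ℝ → ℝ → ℝ)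
    (hγ1 : ∀ n a b, γ n 0 a b = (fun x => F x a b)^[n] (c1 a b))
    (hγ2 : ∀ n a b, γ n 1 a b = (fun x => F x a b)^[n] (c2 a b))
    -- δ-neighborhoods of the critical set
    (Cδ : ℝ → ℝ → ℝ → Set ℝ)
    (hCδ : ∀ δ a b, Cδ δ a b = {x | |x - c1 a b| < δ ∨ |x - c2 a b| < δ})
    (Δ₁ Δ₂ : Set ℝ) (hΔ1 : Δ₁ ⊆ Icc a1 a2) (hΔ2 : Δ₂ ⊆ Icc b1 b2)
    (δ₁ : ℝ) (hδ₁ : 0 < δ₁)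
    -- C⁰ bound on ∂ₐF
    (Ma : ℝ)
    (hMa : ∀ x ∈ Icc x1 x2, ∀ a ∈ Icc a1 a2, ∀ b ∈ Icc b1 b2,
      |deriv (fun a' => F x a' b) a| ≤ Ma)
    -- recursion (e:cr) relating spatial and parametric derivatives
    (hrec : ∀ i : Fin 2, ∀ n : ℕ, ∀ a ∈ Δ₁, ∀ b ∈ Δ₂,
      deriv (fun a' => γ (n + 1) i a' b) a =
        deriv (fun x => F x a b) (γ n i a b) * deriv (fun a' => γ n i a' b) a
          + deriv (fun a' => F (γ n i a b) a' b) a)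
    (ρ K : ℝ) (hρ : 0 < ρ) (hK : 1 < K)
    -- (i)
    (hi : ∀ i : Fin 2, ∀ a ∈ Δ₁, ∀ b ∈ Δ₂, ρ ≤ |deriv (fun a' => γ 1 i a' b) a|)
    -- (ii)
    (hii : ∀ a ∈ Δ₁, ∀ b ∈ Δ₂, ∀ x ∈ Icc x1 x2 \ Cδ δ₁ a b,
      K ≤ |deriv (fun x' => F x' a b) x|)
    -- (iii)
    (hiii : (3 / 4) * K ≤ K * ρ - Ma)
    -- (iv)
    (hiv : Ma * (∑' j : ℕ, (K ^ (j + 2))⁻¹) ≤ 1 / 4) :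
    ∀ i : Fin 2, ∀ a ∈ Δ₁, ∀ b ∈ Δ₂, ∀ n : ℕ, 2 ≤ n →
      (∀ j, 1 ≤ j → j ≤ n - 1 → γ j i a b ∈ Icc x1 x2 \ Cδ δ₁ a b) →
      (1 / 2) * K ^ (n - 1) ≤ |deriv (fun a' => γ n i a' b) a| := by

  intro i a ha b hb n hn hmem
  have haI := hΔ1 ha
  have hbI := hΔ2 hb
  have hK0 : (0:ℝ) < K := lt_trans one_pos hK
  -- the orbit stays in the interval
  have hi2 : i = 0 ∨ i = 1 := by fin_cases i <;> simp
  have hγrec : ∀ m, γ (m+1) i a b = F (γ m i a b) a b := by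
    intro m
    rcases hi2 with rfl | rfl
    · rw [hγ1, hγ1, Function.iterate_succ_apply']
    · rw [hγ2, hγ2, Function.iterate_succ_apply']
  have hγ0 : γ 0 i a b ∈ Icc x1 x2 := by
    rcases hi2 with rfl | rfl
    · rw [hγ1]; exact (hc1 a haI b hbI).1
    · rw [hγ2]; exact (hc2 a haI b hbI).1
  have hγI : ∀ m, γ m i a b ∈ Icc x1 x2 := by
    intro m
    induction m with
    | zero => exact hγ0
    | succ k ih => rw [hγrec]; exact hFmaps _ ih a haI b hbI
  have hMa' : ∀ m, |deriv (fun a' => F (γ m i a b) a' b) a| ≤ Ma := fun m =>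
    hMa _ (hγI m) a haI b hbI
  have hMa0 : (0:ℝ) ≤ Ma := le_trans (abs_nonneg _) (hMa' 0)
  -- write n = m + 2
  obtain ⟨m, rfl⟩ : ∃ m, n = m + 2 := ⟨n - 2, by omega⟩
  -- one step of the recursion
  have hstep : ∀ j, 1 ≤ j → j ≤ m + 1 →
      K * |deriv (fun a' => γ j i a' b) a| - Ma ≤
        |deriv (fun a' => γ (j+1) i a' b) a| := by
    intro j h1 h2
    have hmemj := hmem j h1 (by omega)
    have hf := hii a ha b hb _ hmemj
    have hr : deriv (fun a' => γ (j + 1) i a' b) a =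
        deriv (fun x => F x a b) (γ j i a b) * deriv (fun a' => γ j i a' b) a
          + deriv (fun a' => F (γ j i a b) a' b) a := hrec i j a ha b hb
    set u := deriv (fun x => F x a b) (γ j i a b)
    set D := deriv (fun a' => γ j i a' b) a
    set v := deriv (fun a' => F (γ j i a b) a' b) a
    have habs : |u * D| - |v| ≤ |u * D + v| := by
      have h := abs_sub_abs_le_abs_sub (u * D) (-v)
      simp only [abs_neg, sub_neg_eq_add] at h
      exact h
    have hMv := hMa' j
    rw [hr]
    have huD : K * |D| ≤ |u * D| := by
      rw [abs_mul]
      exact mul_le_mul_of_nonneg_right hf (abs_nonneg _)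
    linarith
  -- the inductive invariant
  have hinv : ∀ k, k ≤ m →
      (3/4) * K ^ (k+1) - Ma * ∑ j ∈ Finset.range k, K ^ j ≤
        |deriv (fun a' => γ (k+2) i a' b) a| := by
    intro k
    induction k with
    | zero =>
      intro _
      have h1 := hstep 1 le_rfl (by omega)
      have h2 := hi i a ha b hb
      simp only [Finset.range_zero, Finset.sum_empty, mul_zero, sub_zero, zero_add, pow_one]
      have : K * ρ ≤ K * |deriv (fun a' => γ 1 i a' b) a| :=
        mul_le_mul_of_nonneg_left h2 (le_of_lt hK0)
      calc (3/4) * K ≤ K * ρ - Ma := hiii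
        _ ≤ K * |deriv (fun a' => γ 1 i a' b) a| - Ma := by linarith
        _ ≤ |deriv (fun a' => γ (1+1) i a' b) a| := h1
        _ = |deriv (fun a' => γ (0+2) i a' b) a| := rfl
    | succ k ih =>
      intro hk
      have h1 := ih (by omega)
      have h2 := hstep (k+2) (by omega) (by omega)
      rw [geom_sum_succ']
      have hG : K * (∑ j ∈ Finset.range k, K ^ j) + 1
          = K ^ k + ∑ j ∈ Finset.range k, K ^ j := by
        rw [← geom_sum_succ, geom_sum_succ']
      have h3 : K * ((3/4) * K ^ (k+1) - Ma * ∑ j ∈ Finset.range k, K ^ j) - Ma ≤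
          K * |deriv (fun a' => γ (k+2) i a' b) a| - Ma := by
        nlinarith
      have h4 : (3/4) * K ^ (k+1+1) - Ma * (K * ∑ j ∈ Finset.range k, K ^ j + 1)
          = K * ((3/4) * K ^ (k+1) - Ma * ∑ j ∈ Finset.range k, K ^ j) - Ma := by
        ring
      rw [← hG, h4]
      calc K * ((3/4) * K ^ (k+1) - Ma * ∑ j ∈ Finset.range k, K ^ j) - Ma
          ≤ K * |deriv (fun a' => γ (k+2) i a' b) a| - Ma := h3
        _ ≤ |deriv (fun a' => γ (k+2+1) i a' b) a| := h2
        _ = |deriv (fun a' => γ (k+1+2) i a' b) a| := rfl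
  -- compute the tsum in (iv)
  have hKinv : K⁻¹ < 1 := inv_lt_one_of_one_lt₀ hK
  have hKinv0 : (0:ℝ) ≤ K⁻¹ := by positivity
  have hT : (∑' j : ℕ, (K ^ (j + 2))⁻¹) = (K * (K - 1))⁻¹ := by
    have h1 : ∀ j : ℕ, (K ^ (j + 2))⁻¹ = (K⁻¹) ^ j * ((K⁻¹)^2) := by
      intro j
      rw [pow_add, mul_inv, inv_pow, inv_pow]
    simp only [h1]
    rw [tsum_mul_right, tsum_geometric_of_lt_one hKinv0 hKinv]
    have hK1 : K - 1 ≠ 0 := ne_of_gt (by linarith)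
    have hKne : K ≠ 0 := ne_of_gt hK0
    field_simp
  rw [hT] at hiv
  have hMaK : Ma ≤ K * (K - 1) / 4 := by
    have hKK : (0:ℝ) < K * (K - 1) := by nlinarith
    rw [← div_eq_mul_inv, div_le_iff₀ hKK] at hiv
    linarith [hiv]
  -- finish
  have hfin := hinv m le_rfl
  have hgeom : ∑ j ∈ Finset.range m, K ^ j = (K ^ m - 1) / (K - 1) :=
    geom_sum_eq (ne_of_gt hK) m
  have hKm1 : (1:ℝ) ≤ K ^ m := one_le_pow₀ (le_of_lt hK)
  have hsum_nonneg : (0:ℝ) ≤ ∑ j ∈ Finset.range m, K ^ j :=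
    Finset.sum_nonneg fun j _ => by positivity
  have hbound : Ma * ∑ j ∈ Finset.range m, K ^ j ≤ (1/4) * K ^ (m + 1) := by
    have hK1pos : (0:ℝ) < K - 1 := by linarith
    have h5 : Ma * ∑ j ∈ Finset.range m, K ^ j ≤
        (K * (K - 1) / 4) * ∑ j ∈ Finset.range m, K ^ j :=
      mul_le_mul_of_nonneg_right hMaK hsum_nonneg
    have hSK : (∑ j ∈ Finset.range m, K ^ j) * (K - 1) = K ^ m - 1 := by
      rw [hgeom]; field_simp
    have hpow : K ^ (m + 1) = K * K ^ m := by ring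
    nlinarith [hsum_nonneg, hK0]
  have hn1 : m + 2 - 1 = m + 1 := by omega
  rw [hn1]
  calc (1/2) * K ^ (m + 1) ≤ (3/4) * K ^ (m+1) - Ma * ∑ j ∈ Finset.range m, K ^ j := by
        have : (0:ℝ) < K ^ (m+1) := by positivity
        linarith
    _ ≤ |deriv (fun a' => γ (m+2) i a' b) a| := hfin
end

section
/- There exists K₀ = K₀(Φ) ≥ 2 such that for every K ≥ K₀ there exists L₀ = L₀(K, Φ) > 0 with the following property. For every L ≥ L₀ and every a ∈ [0,2π), setting f = f_{a,L}, σ = 2 k₁^{−1} L^{−1} K³ and V = {x ∈ S¹ : |f'(x)| ≤ K}: if for every c ∈ C and every n ≥ 1 one has d(f^n(c), C) ≥ σ, then f is a Misiurewicz map with this choice of neighborhood V. -/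
open Set

/-- Distance on the circle `S¹ = ℝ/2πℤ`, computed on lifts. -/
noncomputable def dCirc (x y : ℝ) : ℝ := ⨅ k : ℤ, |x - y - 2 * Real.pi * k|

/-- A map `f ∈ C²(S¹, S¹)` (represented by a lift working with `2π`-periodic data)
satisfies the Misiurewicz conditions with the given set `V` ⊇ `C = {x | f' x = 0}`:
(A1)/(A2) expansion outside `V`, (B) critical orbits stay outside `V`,
(C1)/(C2) nondegeneracy and derivative recovery inside `V`. -/
def IsMisiurewiczWith (f : ℝ → ℝ) (V : Set ℝ) : Prop :=
  ∃ (lam d₀ : ℝ) (M₀ : ℕ), 0 < lam ∧ 0 < M₀ ∧ 0 < d₀ ∧ d₀ ≤ 1 ∧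
    -- (A1)
    (∀ (n : ℕ) (x : ℝ), M₀ ≤ n → (∀ k < n, f^[k] x ∉ V) →
      Real.exp (lam * n) ≤ |deriv (f^[n]) x|) ∧
    -- (A2)
    (∀ (n : ℕ) (x : ℝ), 0 < n → (∀ k < n, f^[k] x ∉ V) → f^[n] x ∈ V →
      d₀ * Real.exp (lam * n) ≤ |deriv (f^[n]) x|) ∧
    -- (B)
    (∀ c : ℝ, deriv f c = 0 → ∀ n : ℕ, 0 < n → f^[n] c ∉ V) ∧
    -- (C1)
    (∀ x ∈ V, deriv (deriv f) x ≠ 0) ∧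
    -- (C2)
    (∀ x ∈ V, deriv f x ≠ 0 → ∃ p : ℕ, 0 < p ∧
      (∀ j, 0 < j → j < p → f^[j] x ∉ V) ∧
      d₀⁻¹ * Real.exp (lam * p / 3) ≤ |deriv (f^[p]) x|)

private lemma dCirc_le' (x y : ℝ) (k : ℤ) : dCirc x y ≤ |x - y - 2 * Real.pi * k| :=
  ciInf_le ⟨0, by rintro _ ⟨k', rfl⟩; positivity⟩ k

private lemma periodic_deriv'' (f : ℝ → ℝ) {p : ℝ} (h : Function.Periodic f p) :
    Function.Periodic (deriv f) p := by
  intro x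
  have hfe : (fun y => f (y + p)) = f := funext h
  calc deriv f (x + p) = deriv (fun y => f (y + p)) x := (deriv_comp_add_const f p x).symm
    _ = deriv f x := by rw [hfe]

private lemma reduce_per {p : ℝ} (hp : 0 < p) (h : ℝ → ℝ) (hper : Function.Periodic h p)
    (y : ℝ) : ∃ k : ℤ, y - p * k ∈ Set.Ico 0 p ∧ h (y - p * k) = h y := by
  refine ⟨toIcoDiv hp 0 y, ?_, ?_⟩
  · have h1 := toIcoMod_mem_Ico hp 0 y
    have h2 : y - p * (toIcoDiv hp 0 y : ℤ) = toIcoMod hp 0 y := by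
      have h3 := self_sub_toIcoMod hp 0 y
      have hz : (toIcoDiv hp 0 y : ℤ) • p = (toIcoDiv hp 0 y : ℝ) * p := zsmul_eq_mul _ _
      rw [hz] at h3
      linarith [h3]
    rw [h2]
    simpa using h1
  · have h4 : y - p * (toIcoDiv hp 0 y : ℤ) = y - (toIcoDiv hp 0 y : ℤ) • p := by
      rw [zsmul_eq_mul]; ring
    rw [h4, hper.sub_zsmul_eq]

private lemma mvt_pair (f g : ℝ → ℝ) (hd : ∀ y, HasDerivAt f (g y) y) {a b : ℝ} (hab : a ≠ b) :
    ∃ ξ, |ξ - a| ≤ |b - a| ∧ |ξ - b| ≤ |b - a| ∧ ξ ≠ a ∧ f b - f a = g ξ * (b - a) := by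
  rcases lt_or_gt_of_ne hab with h | h
  · obtain ⟨ξ, hmem, hs⟩ := exists_hasDerivAt_eq_slope f g h
      (fun x _ => (hd x).continuousAt.continuousWithinAt) (fun x _ => hd x)
    refine ⟨ξ, ?_, ?_, ?_, ?_⟩
    · rw [abs_of_pos (by linarith [hmem.1] : (0:ℝ) < ξ - a),
        abs_of_pos (by linarith : (0:ℝ) < b - a)]
      linarith [hmem.2]
    · rw [abs_of_neg (by linarith [hmem.2] : ξ - b < 0),
        abs_of_pos (by linarith : (0:ℝ) < b - a)]
      linarith [hmem.1]
    · exact ne_of_gt hmem.1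
    · rw [hs, div_mul_cancel₀ _ (by linarith : b - a ≠ 0)]
  · obtain ⟨ξ, hmem, hs⟩ := exists_hasDerivAt_eq_slope f g h
      (fun x _ => (hd x).continuousAt.continuousWithinAt) (fun x _ => hd x)
    refine ⟨ξ, ?_, ?_, ?_, ?_⟩
    · rw [abs_of_neg (by linarith [hmem.2] : ξ - a < 0),
        abs_of_neg (by linarith : b - a < 0)]
      linarith [hmem.1]
    · rw [abs_of_pos (by linarith [hmem.1] : (0:ℝ) < ξ - b),
        abs_of_neg (by linarith : b - a < 0)]
      linarith [hmem.2]
    · exact ne_of_lt hmem.2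
    · have h5 : f a - f b = g ξ * (a - b) := by
        rw [hs, div_mul_cancel₀ _ (by linarith : a - b ≠ 0)]
      nlinarith [h5]

private lemma iterate_hasDerivAt (f g : ℝ → ℝ) (hd : ∀ y, HasDerivAt f (g y) y) (n : ℕ) (x : ℝ) :
    HasDerivAt (f^[n]) (∏ j ∈ Finset.range n, g (f^[j] x)) x := by
  induction n with
  | zero => simpa using hasDerivAt_id x
  | succ n ih =>
      rw [Function.iterate_succ']
      have h := (hd (f^[n] x)).comp x ih
      simpa [Finset.prod_range_succ, mul_comm] using h


set_option maxHeartbeats 4000000 in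
/-- For `f = f_{a,L}(θ) = ζ + L·Φ(θ) + a`,
`k₁ = (1/2)·min{|Φ''(c1)|, |Φ''(c2)|}`, `σ = 2 k₁⁻¹ L⁻¹ K³` and
`V = {x : |f'(x)| ≤ K}`: there is `K₀ = K₀(Φ) ≥ 2` such that for each `K ≥ K₀`
there is `L₀ = L₀(K,Φ) > 0` so that for all `L ≥ L₀` and all `a ∈ [0,2π)`,
if every critical orbit stays at circle distance `≥ σ` from the critical set
`C = {c1, c2}` for all times `n ≥ 1`, then `f` is a Misiurewicz map with this
choice of neighborhood `V`. -/
theorem stmt_3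
    (Φ : ℝ → ℝ) (hΦ : ContDiff ℝ 3 Φ)
    (hper : Function.Periodic Φ (2 * Real.pi))
    (c1 c2 : ℝ) (hc1 : c1 ∈ Ico 0 (2 * Real.pi)) (hc2 : c2 ∈ Ico 0 (2 * Real.pi))
    (hne : c1 ≠ c2)
    (hcrit1 : deriv Φ c1 = 0) (hcrit2 : deriv Φ c2 = 0)
    (hnd1 : deriv (deriv Φ) c1 ≠ 0) (hnd2 : deriv (deriv Φ) c2 ≠ 0)
    (honly : ∀ x : ℝ, deriv Φ x = 0 →
      (∃ k : ℤ, x = c1 + 2 * Real.pi * k) ∨ (∃ k : ℤ, x = c2 + 2 * Real.pi * k))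
    (hval : Φ c1 ≠ Φ c2)
    (ζ : ℝ)
    (k₁ : ℝ)
    (hk₁ : k₁ = (1 / 2) * min |deriv (deriv Φ) c1| |deriv (deriv Φ) c2|) :
    ∃ K₀ ≥ (2 : ℝ), ∀ K ≥ K₀, ∃ L₀ > (0 : ℝ), ∀ L ≥ L₀, ∀ a ∈ Ico 0 (2 * Real.pi),
      (∀ c : ℝ, deriv (fun θ => ζ + L * Φ θ + a) c = 0 → ∀ n : ℕ, 1 ≤ n →
        2 * k₁⁻¹ * L⁻¹ * K ^ 3 ≤
          min (dCirc ((fun θ => ζ + L * Φ θ + a)^[n] c) c1)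
              (dCirc ((fun θ => ζ + L * Φ θ + a)^[n] c) c2)) →
      IsMisiurewiczWith (fun θ => ζ + L * Φ θ + a)
        {x : ℝ | |deriv (fun θ => ζ + L * Φ θ + a) x| ≤ K} := by
  classical
  set g := deriv Φ with hgdef
  have twopi : (0:ℝ) < 2 * Real.pi := by positivity
  -- smoothness facts
  have hΦ' : ContDiff ℝ (2+1 : ℕ) Φ := by exact_mod_cast hΦ
  have h1 := (contDiff_succ_iff_deriv (n := 2)).mp (by exact_mod_cast hΦ')
  have hΦdiff : Differentiable ℝ Φ := h1.1
  have hgC2 : ContDiff ℝ 2 g := h1.2.2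
  have h2 := (contDiff_succ_iff_deriv (n := 1)).mp (by exact_mod_cast hgC2)
  have hgdiff : Differentiable ℝ g := h2.1
  have hgcont : Continuous g := hgdiff.continuous
  have hg'cont : Continuous (deriv g) := h2.2.2.continuous
  -- periodicity
  have hgper : Function.Periodic g (2*Real.pi) := periodic_deriv'' Φ hper
  have hg'per : Function.Periodic (deriv g) (2*Real.pi) := periodic_deriv'' g hgper
  have hshift : ∀ (h : ℝ → ℝ), Function.Periodic h (2*Real.pi) →
      ∀ (u : ℝ) (k : ℤ), h (u - 2*Real.pi*k) = h u := by
    intro h hp u k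
    have h2 : h (u - (k : ℤ) • (2*Real.pi)) = h u := hp.sub_zsmul_eq k
    rw [show u - 2*Real.pi*(k:ℝ) = u - (k:ℤ) • (2*Real.pi) by rw [zsmul_eq_mul]; ring]
    exact h2
  -- k₁
  have hk1pos : 0 < k₁ := by
    have h := lt_min (abs_pos.mpr hnd1) (abs_pos.mpr hnd2)
    rw [hk₁]; linarith
  have hk2c1 : 2 * k₁ ≤ |deriv g c1| := by
    rw [hk₁]
    have := min_le_left |deriv (deriv Φ) c1| |deriv (deriv Φ) c2|
    rw [hgdef]; linarith
  have hk2c2 : 2 * k₁ ≤ |deriv g c2| := by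
    rw [hk₁]
    have := min_le_right |deriv (deriv Φ) c1| |deriv (deriv Φ) c2|
    rw [hgdef]; linarith
  have hgc0 : ∀ c : ℝ, (c = c1 ∨ c = c2) → g c = 0 := by
    rintro c (rfl | rfl) <;> [exact hcrit1; exact hcrit2]
  have hk2' : ∀ c : ℝ, (c = c1 ∨ c = c2) → 2 * k₁ ≤ |deriv g c| := by
    rintro c (rfl | rfl) <;> [exact hk2c1; exact hk2c2]
  -- global bound on deriv g
  obtain ⟨C₂, hC₂k, hC₂⟩ : ∃ C₂ : ℝ, 2*k₁ ≤ C₂ ∧ ∀ y, |deriv g y| ≤ C₂ := by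
    obtain ⟨y₀, hy₀, hmax⟩ := isCompact_Icc.exists_isMaxOn
      (⟨0, Set.mem_Icc.mpr ⟨le_refl 0, by positivity⟩⟩ : (Icc (0:ℝ) (2*Real.pi)).Nonempty)
      ((continuous_abs.comp hg'cont).continuousOn)
    refine ⟨|deriv g y₀|, ?_, ?_⟩
    · have hc1' : c1 ∈ Icc 0 (2*Real.pi) := Ico_subset_Icc_self hc1
      have h := hmax hc1'
      simp only [Function.comp_apply, Set.mem_setOf_eq] at h
      linarith [hk2c1]
    · intro y
      obtain ⟨k, hk1, hk2⟩ := reduce_per twopi (deriv g) hg'per y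
      have h := hmax (Ico_subset_Icc_self hk1)
      simp only [Function.comp_apply, Set.mem_setOf_eq] at h
      rw [hk2] at h
      exact h
  have hC₂pos : 0 < C₂ := by linarith
  -- Lipschitz bound for g
  have hLip : ∀ u v : ℝ, |g u - g v| ≤ C₂ * |u - v| := by
    intro u v
    rcases eq_or_ne v u with rfl | hvu
    · simp
    · obtain ⟨η, _, _, _, hm⟩ := mvt_pair g (deriv g) (fun w => (hgdiff w).hasDerivAt) hvu
      rw [hm, abs_mul]
      exact mul_le_mul_of_nonneg_right (hC₂ η) (abs_nonneg _)
  -- local lemma near critical points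
  obtain ⟨δ, hδpos, hδ⟩ : ∃ δ > 0, ∀ c, (c = c1 ∨ c = c2) →
      ∀ u : ℝ, |u| ≤ δ → k₁ ≤ |deriv g (c + u)| := by
    obtain ⟨δ1, hδ1pos, hδ1⟩ := Metric.continuousAt_iff.mp (hg'cont.continuousAt (x := c1)) k₁ hk1pos
    obtain ⟨δ2, hδ2pos, hδ2⟩ := Metric.continuousAt_iff.mp (hg'cont.continuousAt (x := c2)) k₁ hk1pos
    refine ⟨min δ1 δ2 / 2, by positivity, ?_⟩
    rintro c (rfl | rfl) u hu
    · have hd : dist (c + u) c < δ1 := by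
        rw [Real.dist_eq]
        have := min_le_left δ1 δ2
        have h0 : c + u - c = u := by ring
        rw [h0]; linarith
      have := hδ1 hd
      rw [Real.dist_eq] at this
      have habs := abs_sub_abs_le_abs_sub (deriv g c) (deriv g (c + u))
      rw [abs_sub_comm] at habs
      linarith [hk2c1]
    · have hd : dist (c + u) c < δ2 := by
        rw [Real.dist_eq]
        have := min_le_right δ1 δ2
        have h0 : c + u - c = u := by ring
        rw [h0]; linarith
      have := hδ2 hd
      rw [Real.dist_eq] at this
      have habs := abs_sub_abs_le_abs_sub (deriv g c) (deriv g (c + u))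
      rw [abs_sub_comm] at habs
      linarith [hk2c2]
  have hnear : ∀ c, (c = c1 ∨ c = c2) → ∀ u : ℝ, |u| ≤ δ → k₁ * |u| ≤ |g (c + u)| := by
    intro c hc u hu
    rcases eq_or_ne u 0 with rfl | hu0
    · simp
    · obtain ⟨ξ, hξ1, _, hξne, hmvt⟩ := mvt_pair g (deriv g)
        (fun w => (hgdiff w).hasDerivAt) (show c ≠ c + u by intro h; apply hu0; linarith)
      have hξc : |ξ - c| ≤ |u| := by
        have h0 : c + u - c = u := by ring
        rw [h0] at hξ1; exact hξ1
      have hk : k₁ ≤ |deriv g ξ| := by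
        have := hδ c hc (ξ - c) (le_trans hξc hu)
        rwa [show c + (ξ - c) = ξ by ring] at this
      have hgc : g c = 0 := hgc0 c hc
      calc k₁ * |u| ≤ |deriv g ξ| * |u| := mul_le_mul_of_nonneg_right hk (abs_nonneg u)
        _ = |deriv g ξ * (c + u - c)| := by rw [abs_mul, show c + u - c = u by ring]
        _ = |g (c + u)| := by rw [← hmvt, hgc, sub_zero]
  -- the compact set away from the critical lifts, and its minimum m
  set T : Set ℝ := (⋂ k : ℤ, {y : ℝ | δ ≤ |y - c1 - 2*Real.pi*k|}) ∩
      (⋂ k : ℤ, {y : ℝ | δ ≤ |y - c2 - 2*Real.pi*k|}) with hTdef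
  have hTcl : IsClosed T := by
    apply IsClosed.inter <;>
    · apply isClosed_iInter
      intro k
      exact isClosed_le continuous_const (((continuous_id.sub continuous_const).sub
        continuous_const).abs)
  obtain ⟨m, hmpos, hm⟩ : ∃ m > 0, ∀ y ∈ Icc 0 (2*Real.pi) ∩ T, m ≤ |g y| := by
    by_cases hS : (Icc 0 (2*Real.pi) ∩ T).Nonempty
    · obtain ⟨y₀, hy₀, hmin⟩ := (isCompact_Icc.inter_right hTcl).exists_isMinOn hS
        ((continuous_abs.comp hgcont).continuousOn)
      refine ⟨|g y₀|, ?_, fun y hy => by simpa using hmin hy⟩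
      rcases eq_or_ne (g y₀) 0 with h0 | h0
      · exfalso
        rcases honly y₀ h0 with ⟨k, hk⟩ | ⟨k, hk⟩
        · have := Set.mem_iInter.mp hy₀.2.1 k
          simp only [Set.mem_setOf_eq] at this
          rw [hk] at this
          have h9 : c1 + 2*Real.pi*k - c1 - 2*Real.pi*k = 0 := by ring
          rw [h9, abs_zero] at this
          linarith
        · have := Set.mem_iInter.mp hy₀.2.2 k
          simp only [Set.mem_setOf_eq] at this
          rw [hk] at this
          have h9 : c2 + 2*Real.pi*k - c2 - 2*Real.pi*k = 0 := by ring
          rw [h9, abs_zero] at this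
          linarith
      · exact abs_pos.mpr h0
    · exact ⟨1, one_pos, fun y hy => absurd ⟨y, hy⟩ hS⟩
  -- the key lower bound on |g|
  have keyLower : ∀ y s : ℝ, (∀ k : ℤ, s ≤ |y - c1 - 2*Real.pi*k|) →
      (∀ k : ℤ, s ≤ |y - c2 - 2*Real.pi*k|) → min (k₁ * s) m ≤ |g y| := by
    intro y s h1 h2
    obtain ⟨k₀, hk₀mem, hk₀eq⟩ := reduce_per twopi g hgper y
    set y' := y - 2*Real.pi*k₀ with hy'
    by_cases hnear1 : ∃ c, (c = c1 ∨ c = c2) ∧ ∃ k : ℤ, |y' - c - 2*Real.pi*k| < δ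
    · obtain ⟨c, hc, k, hk⟩ := hnear1
      have ht := hnear c hc (y' - c - 2*Real.pi*k) (le_of_lt hk)
      have he : c + (y' - c - 2*Real.pi*k) = y - 2*Real.pi*((k + k₀ : ℤ) : ℝ) := by
        push_cast; rw [hy']; ring
      rw [he, hshift g hgper y (k + k₀)] at ht
      have hs : s ≤ |y' - c - 2*Real.pi*k| := by
        have he2 : y' - c - 2*Real.pi*k = y - c - 2*Real.pi*((k + k₀ : ℤ) : ℝ) := by
          push_cast; rw [hy']; ring
        rw [he2]
        rcases hc with rfl | rfl
        · exact h1 (k + k₀)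
        · exact h2 (k + k₀)
      calc min (k₁ * s) m ≤ k₁ * s := min_le_left _ _
        _ ≤ k₁ * |y' - c - 2*Real.pi*k| := mul_le_mul_of_nonneg_left hs hk1pos.le
        _ ≤ |g y| := ht
    · push_neg at hnear1
      have hyT : y' ∈ Icc 0 (2*Real.pi) ∩ T := by
        refine ⟨Ico_subset_Icc_self hk₀mem, ?_, ?_⟩ <;>
        · rw [Set.mem_iInter]
          intro k
          simp only [Set.mem_setOf_eq]
          first
          | exact hnear1 c1 (Or.inl rfl) k
          | exact hnear1 c2 (Or.inr rfl) k
      have := hm y' hyT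
      rw [hk₀eq] at this
      exact le_trans (min_le_right _ _) this
  -- constants
  set Q : ℝ := 1 + C₂ / k₁ with hQdef
  have hQ1 : 1 ≤ Q := by
    rw [hQdef]
    have := div_pos hC₂pos hk1pos
    linarith
  clear_value Q
  have hfrac : 0 < 2*C₂/k₁ := div_pos (by linarith) hk1pos
  refine ⟨2 + 2*C₂/k₁ + 2*Q, by linarith, ?_⟩
  intro K hK
  have hK2 : (2:ℝ) ≤ K := by linarith
  have hKpos : (0:ℝ) < K := by linarith
  have hKcube : K ≤ K^3 := le_self_pow₀ (by linarith) (by norm_num)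
  have hKK4 : (4:ℝ) ≤ K*K := by nlinarith only [hK2, sq_nonneg (K-2)]
  have hKlt : K < K^3 := by
    have h := mul_le_mul_of_nonneg_left hKK4 hKpos.le
    nlinarith only [h, hKpos]
  have hKQ : 2*Q ≤ K^3 := by linarith
  have hKC : 2*C₂ ≤ k₁ * K^3 := by
    have h' : 2*C₂/k₁ ≤ K^3 := by linarith
    rw [div_le_iff₀ hk1pos] at h'
    linarith
  refine ⟨2*K/m + K^3/m + 1, by positivity, ?_⟩
  intro L hL a ha hyp
  have hLpos : 0 < L := lt_of_lt_of_le (by positivity) hL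
  set f : ℝ → ℝ := fun θ => ζ + L * Φ θ + a with hfdef
  set σ : ℝ := 2 * k₁⁻¹ * L⁻¹ * K ^ 3 with hσdef
  have hσpos : 0 < σ := by rw [hσdef]; positivity
  have hσL : L * (k₁ * σ) = 2 * K^3 := by
    rw [hσdef]; field_simp
  have hfd : ∀ y, HasDerivAt f (L * g y) y := by
    intro y
    have h := (hΦdiff y).hasDerivAt
    rw [← hgdef] at h
    exact ((h.const_mul L).const_add ζ).add_const a
  have hderivf : deriv f = fun y => L * g y := funext fun y => (hfd y).deriv
  have hiter : ∀ (n : ℕ) (x : ℝ),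
      deriv (f^[n]) x = ∏ j ∈ Finset.range n, (L * g (f^[j] x)) :=
    fun n x => (iterate_hasDerivAt f (fun y => L * g y) hfd n x).deriv
  have hLm : K^3 ≤ L * m := by
    have h0 : (2*K/m + K^3/m + 1) * m = 2*K + K^3 + m := by field_simp
    have hh := mul_le_mul_of_nonneg_right hL hmpos.le
    nlinarith only [h0, hh, hKpos, hmpos]
  have hKm : K < L * m := by
    have h0 : (2*K/m + K^3/m + 1) * m = 2*K + K^3 + m := by field_simp
    have hh := mul_le_mul_of_nonneg_right hL hmpos.le
    nlinarith only [h0, hh, hKpos, hmpos, hKcube]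
  -- orbit hypothesis in usable form
  have horb : ∀ c : ℝ, g c = 0 → ∀ n : ℕ, 1 ≤ n →
      (∀ k : ℤ, σ ≤ |f^[n] c - c1 - 2*Real.pi*k|) ∧
      (∀ k : ℤ, σ ≤ |f^[n] c - c2 - 2*Real.pi*k|) := by
    intro c hc n hn
    have hcrit : deriv f c = 0 := by rw [hderivf]; simp [hc]
    have h := hyp c hcrit n hn
    constructor <;> intro k
    · exact le_trans (le_trans h (le_trans (min_le_left _ _) (dCirc_le' _ _ k))) (le_refl _)
    · exact le_trans (le_trans h (le_trans (min_le_right _ _) (dCirc_le' _ _ k))) (le_refl _)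
  -- magnitude of derivative away from critical lifts
  have hLgK3 : ∀ u s : ℝ, σ/2 ≤ s → (∀ k : ℤ, s ≤ |u - c1 - 2*Real.pi*k|) →
      (∀ k : ℤ, s ≤ |u - c2 - 2*Real.pi*k|) → K^3 ≤ |L * g u| := by
    intro u s hs h1 h2
    have hmin := keyLower u s h1 h2
    have hm1 : K^3 / L ≤ k₁ * s := by
      have he : k₁ * (σ/2) = K^3 / L := by
        rw [hσdef]; field_simp
      calc K^3 / L = k₁ * (σ/2) := he.symm
        _ ≤ k₁ * s := mul_le_mul_of_nonneg_left hs hk1pos.le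
    have hm2 : K^3 / L ≤ m := by
      rw [div_le_iff₀ hLpos]
      calc K^3 ≤ L * m := hLm
        _ = m * L := by ring
    have hmin2 : K^3 / L ≤ min (k₁ * s) m := le_min hm1 hm2
    calc K^3 = L * (K^3 / L) := by field_simp
      _ ≤ L * |g u| := mul_le_mul_of_nonneg_left (le_trans hmin2 hmin) hLpos.le
      _ = |L * g u| := by rw [abs_mul, abs_of_pos hLpos]
  -- membership in V
  have hVmem : ∀ x : ℝ, x ∈ {x : ℝ | |deriv f x| ≤ K} ↔ |L * g x| ≤ K := by
    intro x
    rw [Set.mem_setOf_eq, hderivf]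
  -- points of V are near critical lifts
  have hVnear : ∀ x : ℝ, |L * g x| ≤ K → ∃ c t : ℝ, x = c + t ∧ |t| < δ ∧ g c = 0 ∧
      (∀ u : ℝ, |u| ≤ δ → k₁ ≤ |deriv g (c + u)| ∧ k₁ * |u| ≤ |g (c + u)|) := by
    intro x hx
    have hgx : |g x| ≤ K / L := by
      rw [abs_mul, abs_of_pos hLpos] at hx
      rw [le_div_iff₀ hLpos]; linarith [hx]
    have hgxm : |g x| < m := by
      have : K / L < m := by
        rw [div_lt_iff₀ hLpos]
        calc K < L * m := hKm
          _ = m * L := by ring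
      linarith
    obtain ⟨k₀, hk₀mem, hk₀eq⟩ := reduce_per twopi g hgper x
    set x' := x - 2*Real.pi*k₀ with hx'
    have hnotS : ¬ (x' ∈ Icc 0 (2*Real.pi) ∩ T) := by
      intro hmem
      have := hm x' hmem
      rw [hk₀eq] at this
      linarith
    have hnear2 : ∃ c, (c = c1 ∨ c = c2) ∧ ∃ k : ℤ, |x' - c - 2*Real.pi*k| < δ := by
      by_contra hcon
      push_neg at hcon
      apply hnotS
      refine ⟨Ico_subset_Icc_self hk₀mem, ?_, ?_⟩ <;>
      · rw [Set.mem_iInter]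
        intro k
        simp only [Set.mem_setOf_eq]
        first
        | exact hcon c1 (Or.inl rfl) k
        | exact hcon c2 (Or.inr rfl) k
    obtain ⟨c₀, hc₀, k, hk⟩ := hnear2
    refine ⟨c₀ + 2*Real.pi*((k + k₀ : ℤ) : ℝ), x' - c₀ - 2*Real.pi*k,
      by push_cast; rw [hx']; ring, hk, ?_, ?_⟩
    · have h5 := hshift g hgper (c₀ + 2*Real.pi*((k + k₀ : ℤ) : ℝ)) (k + k₀)
      rw [show c₀ + 2*Real.pi*((k + k₀ : ℤ) : ℝ) - 2*Real.pi*((k + k₀ : ℤ) : ℝ) = c₀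
        by ring] at h5
      rw [← h5]
      exact hgc0 c₀ hc₀
    · intro u hu
      constructor
      · have h3 := hδ c₀ hc₀ u hu
        have h4 := hshift (deriv g) hg'per (c₀ + 2*Real.pi*((k + k₀ : ℤ) : ℝ) + u) (k + k₀)
        rw [show c₀ + 2*Real.pi*((k + k₀ : ℤ) : ℝ) + u - 2*Real.pi*((k + k₀ : ℤ) : ℝ) = c₀ + u
          by ring] at h4
        rw [h4] at h3
        exact h3
      · have h3 := hnear c₀ hc₀ u hu
        have h4 := hshift g hgper (c₀ + 2*Real.pi*((k + k₀ : ℤ) : ℝ) + u) (k + k₀)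
        rw [show c₀ + 2*Real.pi*((k + k₀ : ℤ) : ℝ) + u - 2*Real.pi*((k + k₀ : ℤ) : ℝ) = c₀ + u
          by ring] at h4
        rw [h4] at h3
        exact h3
  -- expansion outside V
  have hback : ∀ (n : ℕ) (x : ℝ), (∀ k, k < n → f^[k] x ∉ {x : ℝ | |deriv f x| ≤ K}) →
      Real.exp (Real.log 2 * n) ≤ |deriv (f^[n]) x| := by
    intro n x hout
    have h1 : ∀ k ∈ Finset.range n, K ≤ |L * g (f^[k] x)| := by
      intro k hk
      have h2 := hout k (Finset.mem_range.mp hk)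
      rw [hVmem] at h2
      exact le_of_lt (not_le.mp h2)
    calc Real.exp (Real.log 2 * n) = 2^n := by
          rw [mul_comm, Real.exp_nat_mul, Real.exp_log two_pos]
      _ ≤ K^n := pow_le_pow_left₀ (by norm_num) hK2 n
      _ = ∏ _k ∈ Finset.range n, K := by rw [Finset.prod_const, Finset.card_range]
      _ ≤ ∏ k ∈ Finset.range n, |L * g (f^[k] x)| :=
          Finset.prod_le_prod (fun _ _ => by linarith) h1
      _ = |∏ k ∈ Finset.range n, (L * g (f^[k] x))| := (Finset.abs_prod _ _).symm
      _ = |deriv (f^[n]) x| := by rw [hiter]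
  unfold IsMisiurewiczWith
  refine ⟨Real.log 2, 1, 1, Real.log_pos one_lt_two, one_pos, one_pos, le_refl 1,
    ?_, ?_, ?_, ?_, ?_⟩
  · -- A1
    intro n x _ hout
    exact hback n x hout
  · -- A2
    intro n x _ hout _
    rw [one_mul]
    exact hback n x hout
  · -- B
    intro c hc n hn hmem
    have hgc : g c = 0 := by
      rw [hderivf] at hc
      rcases mul_eq_zero.mp hc with h | h
      · exact absurd h (ne_of_gt hLpos)
      · exact h
    have horbc := horb c hgc n hn
    have h3 := hLgK3 (f^[n] c) σ (by linarith) horbc.1 horbc.2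
    rw [hVmem] at hmem
    linarith [hKlt]
  · -- C1
    intro x hxV
    rw [hVmem] at hxV
    obtain ⟨c, t, hxct, htδ, _, hpack⟩ := hVnear x hxV
    have h1 : deriv (deriv f) x = L * deriv g x := by
      rw [hderivf]
      exact deriv_const_mul L (hgdiff x)
    rw [h1, hxct]
    have h2 := (hpack t htδ.le).1
    intro hcontra
    rcases mul_eq_zero.mp hcontra with h | h
    · exact absurd h (ne_of_gt hLpos)
    · rw [h, abs_zero] at h2
      linarith
  · -- C2
    intro x hxV hfx
    rw [hVmem] at hxV
    obtain ⟨c, t, hxct, htδ, hgc, hpack⟩ := hVnear x hxV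
    have htne : t ≠ 0 := by
      intro h0
      apply hfx
      rw [hderivf]
      simp only
      rw [hxct, h0, add_zero, hgc, mul_zero]
    have htpos : 0 < |t| := abs_pos.mpr htne
    have htabs : |t| ≠ 0 := ne_of_gt htpos
    have hfx_lb : L * (k₁ * |t|) ≤ |L * g x| := by
      have h := (hpack t htδ.le).2
      rw [hxct]
      calc L * (k₁ * |t|) ≤ L * |g (c + t)| := mul_le_mul_of_nonneg_left h hLpos.le
        _ = |L * g (c + t)| := by rw [abs_mul, abs_of_pos hLpos]
    have horbc := horb c hgc
    set D : ℕ → ℝ := fun j => |f^[j] x - f^[j] c| with hDdef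
    have hcx : c ≠ x := by
      rw [hxct]; intro h; apply htne; linarith
    obtain ⟨ξ, hξ1, hξ2, hξne, hmvtΦ⟩ := mvt_pair Φ g (fun w => by
        have h := (hΦdiff w).hasDerivAt; rwa [← hgdef] at h) hcx
    have hxc_t : x - c = t := by rw [hxct]; ring
    have hξct : |ξ - c| ≤ |t| := by rw [← hxc_t]; exact hξ1
    have hgξ_ub : |g ξ| ≤ C₂ * |t| := by
      have h := hLip ξ c
      rw [hgc, sub_zero] at h
      calc |g ξ| ≤ C₂ * |ξ - c| := h
        _ ≤ C₂ * |t| := mul_le_mul_of_nonneg_left hξct hC₂pos.le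
    have hgξ_pos : 0 < |g ξ| := by
      have h := (hpack (ξ - c) (le_trans hξct htδ.le)).2
      rw [show c + (ξ - c) = ξ by ring] at h
      have h9 : 0 < k₁ * |ξ - c| := mul_pos hk1pos (abs_pos.mpr (sub_ne_zero.mpr hξne))
      linarith
    have hD1 : D 1 = L * |g ξ| * |t| := by
      simp only [hDdef, Function.iterate_one]
      have he : f x - f c = L * (Φ x - Φ c) := by rw [hfdef]; ring
      rw [he, hmvtΦ, hxc_t, abs_mul, abs_mul, abs_of_pos hLpos]
      ring
    have hD1pos : 0 < D 1 := by rw [hD1]; positivity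
    have hD1ub : D 1 ≤ L * C₂ * (|t| * |t|) := by
      rw [hD1]
      calc L * |g ξ| * |t| ≤ L * (C₂ * |t|) * |t| :=
            mul_le_mul_of_nonneg_right (mul_le_mul_of_nonneg_left hgξ_ub hLpos.le) (abs_nonneg t)
        _ = L * C₂ * (|t| * |t|) := by ring
    -- one-step lemma
    have hstep : ∀ j : ℕ, 1 ≤ j → D j ≤ σ/2 → 0 < D j →
        K^3 ≤ |L * g (f^[j] x)| ∧ K^3 * D j ≤ D (j+1) ∧
          D (j+1) ≤ Q * |L * g (f^[j] x)| * D j := by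
      intro j hj hDle hDpos
      have hzj := horbc j hj
      have hDj : |f^[j] x - f^[j] c| ≤ σ/2 := hDle
      have hw : ∀ w : ℝ, |w - f^[j] c| ≤ σ/2 → K^3 ≤ |L * g w| := by
        intro w hwle
        refine hLgK3 w (σ/2) le_rfl (fun k => ?_) (fun k => ?_)
        · have h1 := hzj.1 k
          have e : f^[j] c - c1 - 2*Real.pi*(k:ℝ) = (w - c1 - 2*Real.pi*(k:ℝ)) + (f^[j] c - w) := by
            ring
          have h2 : |f^[j] c - c1 - 2*Real.pi*(k:ℝ)| ≤ |w - c1 - 2*Real.pi*(k:ℝ)| + |w - f^[j] c| := by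
            calc |f^[j] c - c1 - 2*Real.pi*(k:ℝ)|
                = |(w - c1 - 2*Real.pi*(k:ℝ)) + (f^[j] c - w)| := by rw [e]
              _ ≤ |w - c1 - 2*Real.pi*(k:ℝ)| + |f^[j] c - w| := abs_add_le _ _
              _ = |w - c1 - 2*Real.pi*(k:ℝ)| + |w - f^[j] c| := by
                  rw [abs_sub_comm (f^[j] c) w]
          linarith
        · have h1 := hzj.2 k
          have e : f^[j] c - c2 - 2*Real.pi*(k:ℝ) = (w - c2 - 2*Real.pi*(k:ℝ)) + (f^[j] c - w) := by
            ring
          have h2 : |f^[j] c - c2 - 2*Real.pi*(k:ℝ)| ≤ |w - c2 - 2*Real.pi*(k:ℝ)| + |w - f^[j] c| := by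
            calc |f^[j] c - c2 - 2*Real.pi*(k:ℝ)|
                = |(w - c2 - 2*Real.pi*(k:ℝ)) + (f^[j] c - w)| := by rw [e]
              _ ≤ |w - c2 - 2*Real.pi*(k:ℝ)| + |f^[j] c - w| := abs_add_le _ _
              _ = |w - c2 - 2*Real.pi*(k:ℝ)| + |w - f^[j] c| := by
                  rw [abs_sub_comm (f^[j] c) w]
          linarith
      have hyK : K^3 ≤ |L * g (f^[j] x)| := hw _ hDj
      have hne2 : f^[j] c ≠ f^[j] x := by
        have hD' : 0 < |f^[j] x - f^[j] c| := hDpos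
        intro h
        rw [h, sub_self, abs_zero] at hD'
        exact lt_irrefl 0 hD'
      obtain ⟨ξ', hξ'a, hξ'b, _, hmvt⟩ := mvt_pair f (fun u => L * g u) hfd hne2
      have hξ'c : |ξ' - f^[j] c| ≤ σ/2 := le_trans hξ'a hDj
      have hξ'K : K^3 ≤ |L * g ξ'| := hw ξ' hξ'c
      have hup : |L * g ξ'| ≤ Q * |L * g (f^[j] x)| := by
        have hd : |g ξ' - g (f^[j] x)| ≤ C₂ * (σ/2) := by
          calc |g ξ' - g (f^[j] x)| ≤ C₂ * |ξ' - f^[j] x| := hLip _ _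
            _ ≤ C₂ * (σ/2) := mul_le_mul_of_nonneg_left (le_trans hξ'b hDj) hC₂pos.le
        have h5 : |L * g ξ'| ≤ |L * g (f^[j] x)| + L * (C₂ * (σ/2)) := by
          have h6 : |L * g ξ' - L * g (f^[j] x)| ≤ L * (C₂ * (σ/2)) := by
            rw [show L * g ξ' - L * g (f^[j] x) = L * (g ξ' - g (f^[j] x)) by ring,
              abs_mul, abs_of_pos hLpos]
            exact mul_le_mul_of_nonneg_left hd hLpos.le
          have h7 := abs_sub_abs_le_abs_sub (L * g ξ') (L * g (f^[j] x))
          linarith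
        have h8 : L * (C₂ * (σ/2)) = C₂/k₁ * K^3 := by
          rw [hσdef]; field_simp
        have h9 : C₂/k₁ * K^3 ≤ C₂/k₁ * |L * g (f^[j] x)| :=
          mul_le_mul_of_nonneg_left hyK (le_of_lt (div_pos hC₂pos hk1pos))
        calc |L * g ξ'| ≤ |L * g (f^[j] x)| + L * (C₂ * (σ/2)) := h5
          _ = |L * g (f^[j] x)| + C₂/k₁ * K^3 := by rw [h8]
          _ ≤ |L * g (f^[j] x)| + C₂/k₁ * |L * g (f^[j] x)| := by linarith
          _ = Q * |L * g (f^[j] x)| := by rw [hQdef]; ring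
      have hDs : D (j+1) = |L * g ξ'| * D j := by
        simp only [hDdef]
        rw [Function.iterate_succ_apply', Function.iterate_succ_apply', hmvt, abs_mul]
      refine ⟨hyK, ?_, ?_⟩
      · rw [hDs]
        exact mul_le_mul_of_nonneg_right hξ'K hDpos.le
      · rw [hDs]
        exact mul_le_mul_of_nonneg_right hup hDpos.le
    -- escape time exists
    have hK32 : (2:ℝ) ≤ K^3 := by linarith
    have hexists : ∃ q : ℕ, 1 ≤ q ∧ σ/2 < D q := by
      by_contra hcon
      push_neg at hcon
      have grow : ∀ i : ℕ, 0 < D (i+1) ∧ 2^i * D 1 ≤ D (i+1) := by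
        intro i
        induction i with
        | zero => exact ⟨hD1pos, by norm_num⟩
        | succ i ih =>
            have h1 : 1 ≤ i+1 := by omega
            have hle := hcon (i+1) h1
            have hs := hstep (i+1) h1 hle ih.1
            constructor
            · exact lt_of_lt_of_le (mul_pos (pow_pos hKpos 3) ih.1) hs.2.1
            · calc 2^(i+1) * D 1 = 2 * (2^i * D 1) := by ring
                _ ≤ 2 * D (i+1) := by linarith [ih.2]
                _ ≤ K^3 * D (i+1) := mul_le_mul_of_nonneg_right hK32 ih.1.le
                _ ≤ D (i+2) := hs.2.1
      obtain ⟨q, hq⟩ := pow_unbounded_of_one_lt (σ/(2 * D 1)) one_lt_two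
      have h2 := (grow q).2
      have h3 := hcon (q+1) (by omega)
      have h4 : σ/2 < 2^q * D 1 := by
        rw [div_lt_iff₀ (by positivity : (0:ℝ) < 2 * D 1)] at hq
        nlinarith only [hq]
      linarith only [h2, h3, h4]
    obtain ⟨n, hpD, hqmin⟩ : ∃ n : ℕ, σ/2 < D (n+1) ∧
        ∀ r, r < n+1 → ¬(1 ≤ r ∧ σ/2 < D r) := by
      have hspec := Nat.find_spec hexists
      refine ⟨Nat.find hexists - 1, ?_, ?_⟩
      · rw [show Nat.find hexists - 1 + 1 = Nat.find hexists by omega]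
        exact hspec.2
      · intro r hr
        apply Nat.find_min hexists
        omega
    have hpmin : ∀ j, 1 ≤ j → j < n+1 → D j ≤ σ/2 :=
      fun j h1 h2 => le_of_not_gt fun h3 => hqmin j h2 ⟨h1, h3⟩
    set P : ℕ → ℝ := fun j => ∏ i ∈ Finset.Ico 1 j, |L * g (f^[i] x)| with hPdef
    have hPnonneg : ∀ j, 0 ≤ P j := fun j => Finset.prod_nonneg fun i _ => abs_nonneg _
    have cum : ∀ j, 1 ≤ j → j ≤ n+1 →
        0 < D j ∧ (K^3)^(j-1) ≤ P j ∧ D j ≤ Q^(j-1) * P j * D 1 := by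
      intro j hj
      induction j, hj using Nat.le_induction with
      | base =>
          intro _
          refine ⟨hD1pos, ?_, ?_⟩
          · simp [hPdef]
          · simp [hPdef]
      | succ j hj ih =>
          intro hjp
          have hjlt : j < n+1 := by omega
          obtain ⟨hDj, hPj, hDQ⟩ := ih (by omega)
          have hDle := hpmin j hj hjlt
          obtain ⟨hKy, hgrow2, hupper⟩ := hstep j hj hDle hDj
          have hPsucc : P (j+1) = P j * |L * g (f^[j] x)| := by
            simp only [hPdef]
            exact Finset.prod_Ico_succ_top hj _
          have hidx : j + 1 - 1 = (j-1) + 1 := by omega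
          have hQ0 : (0:ℝ) ≤ Q := by linarith
          refine ⟨?_, ?_, ?_⟩
          · exact lt_of_lt_of_le (mul_pos (pow_pos hKpos 3) hDj) hgrow2
          · rw [hidx, pow_succ, hPsucc]
            exact mul_le_mul hPj hKy (by positivity) (hPnonneg j)
          · calc D (j+1) ≤ Q * |L * g (f^[j] x)| * D j := hupper
              _ ≤ Q * |L * g (f^[j] x)| * (Q^(j-1) * P j * D 1) :=
                  mul_le_mul_of_nonneg_left hDQ (mul_nonneg hQ0 (abs_nonneg _))
              _ = Q^((j-1)+1) * (P j * |L * g (f^[j] x)|) * D 1 := by rw [pow_succ]; ring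
              _ = Q^(j+1-1) * P (j+1) * D 1 := by rw [hidx, hPsucc]
    obtain ⟨hDp, hPp, hDpQ⟩ := cum (n+1) (by omega) le_rfl
    simp only [Nat.add_sub_cancel] at hPp hDpQ
    refine ⟨n+1, by omega, ?_, ?_⟩
    · intro j hj0 hjp
      have hDj := (cum j hj0 (le_of_lt hjp)).1
      have h5 := (hstep j hj0 (hpmin j hj0 hjp) hDj).1
      intro hmem
      rw [hVmem] at hmem
      linarith [hKlt]
    · rw [inv_one, one_mul, hiter (n+1) x, Finset.abs_prod]
      have hsplit : ∏ j ∈ Finset.range (n+1), |L * g (f^[j] x)| = |L * g x| * P (n+1) := by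
        rw [Finset.prod_range_succ']
        have h6 : P (n+1) = ∏ i ∈ Finset.range n, |L * g (f^[i+1] x)| := by
          simp only [hPdef]
          rw [Finset.prod_Ico_eq_prod_range]
          simp only [Nat.add_sub_cancel]
          exact Finset.prod_congr rfl fun i _ => by rw [add_comm]
        rw [h6]
        simp only [Function.iterate_zero_apply]
        ring
      rw [hsplit]
      -- numeric conclusion
      have hQpos : (0:ℝ) < Q := by linarith
      have hB2 : σ/2 ≤ Q^n * P (n+1) * D 1 := le_of_lt (lt_of_lt_of_le hpD hDpQ)
      have hBge : σ / (2 * Q^n * D 1) ≤ P (n+1) := by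
        rw [div_le_iff₀ (by positivity)]
        calc σ = 2 * (σ/2) := by ring
          _ ≤ 2 * (Q^n * P (n+1) * D 1) := by linarith
          _ = P (n+1) * (2 * Q^n * D 1) := by ring
      have hApos : (0:ℝ) ≤ |L * g x| := abs_nonneg _
      have hx1 : (L*(k₁*|t|))^2 ≤ (|L * g x|)^2 :=
        pow_le_pow_left₀ (by positivity) hfx_lb 2
      have hKn0 : (0:ℝ) ≤ (K^3)^n := by positivity
      have hx2 : (K^3)^n * (σ/(2*Q^n*D 1)) ≤ P (n+1) * P (n+1) :=
        mul_le_mul hPp hBge (by positivity) (le_trans hKn0 hPp)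
      have step1 : (L*(k₁*|t|))^2 * ((K^3)^n * (σ / (2*Q^n*D 1))) ≤
          (|L * g x| * P (n+1))^2 := by
        calc (L*(k₁*|t|))^2 * ((K^3)^n * (σ/(2*Q^n*D 1)))
            ≤ (|L * g x|)^2 * (P (n+1) * P (n+1)) :=
              mul_le_mul hx1 hx2 (by positivity) (by positivity)
          _ = (|L * g x| * P (n+1))^2 := by ring
      have hmono : 2*Q^n*D 1 ≤ 2*Q^n*(L*C₂*(|t| * |t|)) := by
        exact mul_le_mul_of_nonneg_left hD1ub (by positivity : (0:ℝ) ≤ 2*Q^n)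
      have hd1 : σ/(2*Q^n*(L*C₂*(|t| * |t|))) ≤ σ/(2*Q^n*D 1) :=
        div_le_div_of_nonneg_left hσpos.le (by positivity) hmono
      have keyeq : (L*(k₁*|t|))^2 * ((K^3)^n * (σ/(2*Q^n*(L*C₂*(|t| * |t|))))) =
          (k₁*K^3/C₂) * ((K^3)^n/Q^n) := by
        rw [hσdef]
        rw [show |t| * |t| = t * t from by rw [← abs_mul, abs_of_nonneg (mul_self_nonneg t)],
          show (L*(k₁*|t|))^2 = L^2*k₁^2*(t*t) from by
            rw [mul_pow, mul_pow, sq_abs]; ring]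
        field_simp
      have h1' : (2:ℝ) ≤ k₁*K^3/C₂ := by
        rw [le_div_iff₀ hC₂pos]; linarith [hKC]
      have hdiv : (2:ℝ) ≤ K^3/Q := by
        rw [le_div_iff₀ hQpos]; linarith [hKQ]
      have h2' : (2:ℝ)^n ≤ (K^3)^n/Q^n := by
        rw [show (K^3)^n/Q^n = (K^3/Q)^n from (div_pow _ _ n).symm]
        exact pow_le_pow_left₀ (by norm_num) hdiv n
      have hfin : (2:ℝ)^(n+1) ≤ (k₁*K^3/C₂) * ((K^3)^n/Q^n) := by
        calc (2:ℝ)^(n+1) = 2 * 2^n := by ring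
          _ ≤ (k₁*K^3/C₂) * ((K^3)^n/Q^n) :=
              mul_le_mul h1' h2' (by positivity) (by linarith)
      have step2 : (2:ℝ)^(n+1) ≤ (L*(k₁*|t|))^2 * ((K^3)^n * (σ / (2*Q^n*D 1))) := by
        calc (2:ℝ)^(n+1) ≤ (k₁*K^3/C₂) * ((K^3)^n/Q^n) := hfin
          _ = (L*(k₁*|t|))^2 * ((K^3)^n * (σ/(2*Q^n*(L*C₂*(|t| * |t|))))) := keyeq.symm
          _ ≤ (L*(k₁*|t|))^2 * ((K^3)^n * (σ/(2*Q^n*D 1))) := by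
              apply mul_le_mul_of_nonneg_left _ (by positivity)
              exact mul_le_mul_of_nonneg_left hd1 hKn0
      have hsq : (Real.exp (Real.log 2 * (n+1 : ℕ) / 3))^2 ≤ (|L * g x| * P (n+1))^2 := by
        have hexp2 : (Real.exp (Real.log 2 * (n+1 : ℕ) / 3))^2 ≤ (2:ℝ)^(n+1) := by
          rw [← Real.exp_nat_mul]
          rw [show ((2:ℝ))^(n+1) = Real.exp ((n+1 : ℕ) * Real.log 2) by
            rw [Real.exp_nat_mul, Real.exp_log two_pos]]
          apply Real.exp_le_exp.mpr
          have hX : (0:ℝ) ≤ ((n:ℝ)+1) * Real.log 2 := by positivity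
          push_cast
          nlinarith only [hX]
        linarith [le_trans step2 step1]
      have hfinal := Real.sqrt_le_sqrt hsq
      rwa [Real.sqrt_sq (Real.exp_pos _).le,
        Real.sqrt_sq (mul_nonneg hApos (hPnonneg (n+1)))] at hfinal
end

section
/- There exists μ₀ > 0 such that for every μ ∈ (0, μ₀] and every (z₀, θ₀) with K₄^{−1} ≤ z₀ ≤ K₄ and θ₀ ∈ S¹, one has K₄^{−1} ≤ z₁/z̃ ≤ K₄, where z₁ = (z₀² + 2L μ^{ρ₂−ρ₁} z₀ sin θ₀ + L² μ^{2(ρ₂−ρ₁)})^{1/2} and z̃ = L μ^{ρ₂−ρ₁} − K₄. In other words, for μ sufficiently small the composition G_{τ(μ)} ∘ κ of the kick map with the time-τ(μ) linear relaxation flow maps the annulus 𝒜 = {(z,θ) : K₄^{−1} ≤ z ≤ K₄} into itself. -/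
open Set

/-- Fix `K₄ > 1`, `L > 0` and exponents `ρ₁ > ρ₂ > 0`.
With `z₁ = (z₀² + 2L μ^{ρ₂−ρ₁} z₀ sin θ₀ + L² μ^{2(ρ₂−ρ₁)})^{1/2}` (the radial
coordinate of the kicked point) and `z̃ = L μ^{ρ₂−ρ₁} − K₄`, there is `μ₀ > 0` such
that for every `μ ∈ (0, μ₀]` and every `(z₀, θ₀)` with `K₄⁻¹ ≤ z₀ ≤ K₄`:
`K₄⁻¹ ≤ z₁/z̃ ≤ K₄`; i.e. `G_{τ(μ)} ∘ κ` maps the annulus `𝒜` into itself. -/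
theorem stmt_7
    (K₄ L ρ₁ ρ₂ : ℝ) (hK₄ : 1 < K₄) (hL : 0 < L)
    (hρ₂ : 0 < ρ₂) (hρ : ρ₂ < ρ₁) :
    ∃ μ₀ > (0 : ℝ), ∀ μ ∈ Ioc (0 : ℝ) μ₀, ∀ z₀ ∈ Icc K₄⁻¹ K₄, ∀ θ₀ : ℝ,
      K₄⁻¹ ≤
        Real.sqrt (z₀ ^ 2 + 2 * L * μ ^ (ρ₂ - ρ₁) * z₀ * Real.sin θ₀
            + L ^ 2 * μ ^ (2 * (ρ₂ - ρ₁))) / (L * μ ^ (ρ₂ - ρ₁) - K₄) ∧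
      Real.sqrt (z₀ ^ 2 + 2 * L * μ ^ (ρ₂ - ρ₁) * z₀ * Real.sin θ₀
            + L ^ 2 * μ ^ (2 * (ρ₂ - ρ₁))) / (L * μ ^ (ρ₂ - ρ₁) - K₄) ≤ K₄ := by
  set e : ℝ := ρ₂ - ρ₁ with he
  have hepos : e < 0 := by simp only [he]; linarith
  have hene : e ≠ 0 := ne_of_lt hepos
  have hK0 : 0 < K₄ := lt_trans one_pos hK₄
  set C : ℝ := K₄ * (K₄ + 1) / (K₄ - 1) with hC
  have hCK : K₄ < C := by
    rw [hC, lt_div_iff₀ (by linarith : (0:ℝ) < K₄ - 1)]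
    nlinarith
  have hCpos : 0 < C := lt_trans hK0 hCK
  have hCL : 0 < C / L := div_pos hCpos hL
  refine ⟨(C / L) ^ e⁻¹, Real.rpow_pos_of_pos hCL _, ?_⟩
  intro μ hμ z₀ hz₀ θ₀
  obtain ⟨hμ0, hμle⟩ := hμ
  obtain ⟨hz₀l, hz₀u⟩ := hz₀
  have hz₀pos : 0 < z₀ := lt_of_lt_of_le (inv_pos.mpr hK0) hz₀l
  have hmono : ((C / L) ^ e⁻¹) ^ e ≤ μ ^ e :=
    Real.rpow_le_rpow_of_nonpos hμ0 hμle (le_of_lt hepos)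
  have hCLe : ((C / L) ^ e⁻¹) ^ e = C / L := Real.rpow_inv_rpow hCL.le hene
  set M : ℝ := L * μ ^ e with hM
  have hMC : C ≤ M := by
    rw [hM, ← div_le_iff₀' hL]
    rw [hCLe] at hmono
    exact hmono
  have hMK : K₄ < M := lt_of_lt_of_le hCK hMC
  have hztil : 0 < M - K₄ := by linarith
  have hsq : μ ^ (2 * e) = (μ ^ e) ^ 2 := by
    rw [mul_comm, Real.rpow_mul hμ0.le, Real.rpow_two]
  set E : ℝ := z₀ ^ 2 + 2 * L * μ ^ e * z₀ * Real.sin θ₀ + L ^ 2 * μ ^ (2 * e)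
    with hE
  have hE2 : E = z₀ ^ 2 + 2 * M * z₀ * Real.sin θ₀ + M ^ 2 := by
    rw [hE, hsq, hM]; ring
  have hsin1 : Real.sin θ₀ ≤ 1 := Real.sin_le_one θ₀
  have hsin2 : -1 ≤ Real.sin θ₀ := Real.neg_one_le_sin θ₀
  have hMz : 0 < M * z₀ := mul_pos (lt_trans hK0 hMK) hz₀pos
  have hlow : M - z₀ ≤ Real.sqrt E := by
    rw [show M - z₀ = Real.sqrt ((M - z₀) ^ 2) from
      (Real.sqrt_sq (by linarith)).symm]
    apply Real.sqrt_le_sqrt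
    rw [hE2]; nlinarith
  have hup : Real.sqrt E ≤ M + z₀ := by
    rw [show M + z₀ = Real.sqrt ((M + z₀) ^ 2) from
      (Real.sqrt_sq (by linarith)).symm]
    apply Real.sqrt_le_sqrt
    rw [hE2]; nlinarith
  clear_value E M
  constructor
  · rw [le_div_iff₀ hztil]
    have : K₄⁻¹ * (M - K₄) ≤ M - z₀ := by
      have h1 : K₄⁻¹ ≤ 1 := by
        rw [inv_le_one_iff₀]; right; linarith
      have h2 : K₄⁻¹ * (M - K₄) ≤ M - K₄ := by
        nlinarith
      linarith
    linarith
  · rw [div_le_iff₀ hztil]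
    have hM1 : K₄ * (K₄ + 1) ≤ M * (K₄ - 1) := by
      rw [hC, div_le_iff₀ (by linarith : (0:ℝ) < K₄ - 1)] at hMC
      linarith
    have hexp : K₄ * (M - K₄) = M * (K₄ - 1) + M - K₄ ^ 2 := by ring
    rw [hexp]
    linarith only [hup, hM1, hz₀u]
end
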